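/- With notation as above, for h ∈ D(A*), a > 0, and φ_a(x) = ∫_0^a e^{i⟨e^{sA}x,h⟩ − (1/2)⟨Q_s h,h⟩} ds, the limit lim_{t→0+} (R_tφ_a(x) − φ_a(x))/t exists pointwise and equals e^{i⟨e^{aA}x,h⟩ − (1/2)⟨Q_a h,h⟩} − e^{i⟨x,h⟩}, with |R_tφ_a(x) − φ_a(x)| ≤ 2t for all x. Hence φ_a belongs to the domain D(L) of the generator of the OU semigroup. -/

import Mathlib

set_option linter.unusedSectionVars false
set_option linter.unusedVariables false
set_option maxHeartbeats 800000

open MeasureTheory Filter Topology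
open scoped RealInnerProductSpace

variable {H : Type*} [NormedAddCommGroup H] [InnerProductSpace ℝ H] [CompleteSpace H]
  [TopologicalSpace.SeparableSpace H] [MeasurableSpace H] [BorelSpace H]

/-- `Q_t h = ∫_0^t e^{sA} Q e^{sA*} h ds`. -/
noncomputable def QtOp (S : ℝ → H →L[ℝ] H) (Q : H →L[ℝ] H) (t : ℝ) (h : H) : H :=
  ∫ u in (0:ℝ)..t, S u (Q ((ContinuousLinearMap.adjoint (S u)) h))

/-- The function `x ↦ e^{i⟪e^{sA}x, h⟫ - ⟪Q_s h, h⟫/2}`. -/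
noncomputable def ouExp (S : ℝ → H →L[ℝ] H) (Q : H →L[ℝ] H) (h : H) (s : ℝ) (x : H) : ℂ :=
  Complex.exp (Complex.I * (⟪S s x, h⟫ : ℂ) - (⟪QtOp S Q s h, h⟫ : ℂ) / 2)

/-- `φ_a(x) = ∫_0^a e^{i⟪e^{sA}x,h⟫ - ⟪Q_s h,h⟫/2} ds`. -/
noncomputable def phiA (S : ℝ → H →L[ℝ] H) (Q : H →L[ℝ] H) (h : H) (a : ℝ) (x : H) : ℂ :=
  ∫ s in (0:ℝ)..a, ouExp S Q h s x

/-- The Ornstein–Uhlenbeck semigroup `R_t φ(x) = ∫_H φ(e^{tA}x + y) N_{Q_t}(dy)`. -/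
noncomputable def ROU (S : ℝ → H →L[ℝ] H) (N : ℝ → Measure H) (t : ℝ)
    (φ : H → ℂ) (x : H) : ℂ :=
  ∫ y, φ (S t x + y) ∂(N t)

/-- Hypotheses: `S` is a C₀-semigroup, `Q` is nonnegative symmetric, and `N t` is the
centered Gaussian measure on `H` with covariance `Q_t`, characterized by its
characteristic functional `∫ e^{i⟪y,h⟫} N_t(dy) = e^{-⟪Q_t h,h⟫/2}`. -/
def IsOUSetup (S : ℝ → H →L[ℝ] H) (Q : H →L[ℝ] H) (N : ℝ → Measure H) : Prop :=
  S 0 = ContinuousLinearMap.id ℝ H ∧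
  (∀ t s : ℝ, 0 ≤ t → 0 ≤ s → S (t + s) = (S t).comp (S s)) ∧
  (∀ x : H, ContinuousOn (fun t => S t x) (Set.Ici 0)) ∧
  (∀ x y : H, ⟪Q x, y⟫ = ⟪x, Q y⟫) ∧ (∀ x : H, 0 ≤ ⟪Q x, x⟫) ∧
  (∀ h : H, ∀ t : ℝ,
    IntervalIntegrable (fun u => S u (Q ((ContinuousLinearMap.adjoint (S u)) h)))
      MeasureTheory.volume 0 t) ∧
  (∀ t, IsProbabilityMeasure (N t)) ∧
  (∀ t : ℝ, 0 ≤ t → ∀ h : H,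
    ∫ y, Complex.exp (Complex.I * (⟪y, h⟫ : ℂ)) ∂(N t) =
      Complex.exp (-(⟪QtOp S Q t h, h⟫ : ℂ) / 2))

/-- Membership `φ ∈ D(L)` with `L φ = g` for the generator of the OU semigroup
(complex-valued version): bounded uniformly continuous functions with pointwise
convergence of the difference quotients, uniformly bounded for `t ∈ (0,1)`. -/
def MemDomL (S : ℝ → H →L[ℝ] H) (N : ℝ → Measure H) (φ g : H → ℂ) : Prop :=
  UniformContinuous φ ∧ (∃ C, ∀ x, ‖φ x‖ ≤ C) ∧
  UniformContinuous g ∧ (∃ C, ∀ x, ‖g x‖ ≤ C) ∧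
  (∀ x, Tendsto (fun t : ℝ => (ROU S N t φ x - φ x) / (t : ℂ))
    (𝓝[>] (0:ℝ)) (𝓝 (g x))) ∧
  (∃ C, ∀ t ∈ Set.Ioo (0:ℝ) 1, ∀ x, ‖ROU S N t φ x - φ x‖ / t ≤ C)

namespace OUAux


lemma norm_exp_I_mul (r : ℝ) : ‖Complex.exp (Complex.I * r)‖ = 1 := by
  rw [Complex.norm_exp]
  simp

lemma norm_exp_I_sub_one (θ : ℝ) : ‖Complex.exp (Complex.I * θ) - 1‖ ≤ 2 * |θ| := by
  rcases le_or_gt |θ| 1 with hθ | hθ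
  · have h1 : ‖Complex.I * θ‖ ≤ 1 := by
      simpa [map_mul] using hθ
    have := Complex.norm_exp_sub_one_le h1
    simpa [map_mul] using this
  · have h2 : ‖Complex.exp (Complex.I * θ) - 1‖ ≤ 2 := by
      calc ‖Complex.exp (Complex.I * θ) - 1‖ ≤ ‖Complex.exp (Complex.I * θ)‖ + ‖(1:ℂ)‖ :=
            norm_sub_le _ _
        _ = 2 := by rw [norm_exp_I_mul]; norm_num
    nlinarith
  
lemma norm_exp_I_sub_exp_I (α β : ℝ) :
    ‖Complex.exp (Complex.I * α) - Complex.exp (Complex.I * β)‖ ≤ 2 * |α - β| := by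
  have key : Complex.exp (Complex.I * α) - Complex.exp (Complex.I * β)
      = Complex.exp (Complex.I * β) * (Complex.exp (Complex.I * ((α - β : ℝ) : ℂ)) - 1) := by
    rw [mul_sub, mul_one, ← Complex.exp_add]
    congr 1
    push_cast
    ring
  rw [key, norm_mul, norm_exp_I_mul, one_mul]
  exact norm_exp_I_sub_one (α - β)

lemma norm_exp_aux (r c : ℝ) (hc : 0 ≤ c) : ‖Complex.exp (Complex.I * r - (c:ℂ)/2)‖ ≤ 1 := by
  have harg : Complex.I * r - (c:ℂ)/2 = Complex.I * r + ((-c/2 : ℝ) : ℂ) := by push_cast; ring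
  rw [harg, Complex.norm_exp]
  have : (Complex.I * (r:ℂ) + ((-c/2 : ℝ) : ℂ)).re = -c/2 := by simp
  rw [this]
  exact Real.exp_le_one_iff.mpr (by linarith)

lemma exp_pair (c α β : ℝ) (hc : 0 ≤ c) :
    ‖Complex.exp (Complex.I * α - (c:ℂ)/2) - Complex.exp (Complex.I * β - (c:ℂ)/2)‖
      ≤ 2 * |α - β| := by
  have hsplit : ∀ r : ℝ, Complex.exp (Complex.I * r - (c:ℂ)/2)
      = Complex.exp (-(c:ℂ)/2) * Complex.exp (Complex.I * r) := by
    intro r; rw [← Complex.exp_add]; congr 1; ring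
  rw [hsplit α, hsplit β, ← mul_sub, norm_mul]
  have h1 : ‖Complex.exp (-(c:ℂ)/2)‖ ≤ 1 := by
    have : -(c:ℂ)/2 = ((-c/2 : ℝ) : ℂ) := by push_cast; ring
    rw [this, Complex.norm_exp, Complex.ofReal_re]
    exact Real.exp_le_one_iff.mpr (by linarith)
  calc ‖Complex.exp (-(c:ℂ)/2)‖ * ‖Complex.exp (Complex.I * α) - Complex.exp (Complex.I * β)‖
      ≤ 1 * (2 * |α - β|) :=
        mul_le_mul h1 (norm_exp_I_sub_exp_I α β) (norm_nonneg _) zero_le_one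
    _ = 2 * |α - β| := one_mul _


variable (S : ℝ → H →L[ℝ] H) (Q : H →L[ℝ] H) (h : H)

/-- integrand of `QtOp`. -/
noncomputable def qf (u : ℝ) : H := S u (Q ((ContinuousLinearMap.adjoint (S u)) h))

/-- scalar primitive `c(s) = ⟪Q_s h, h⟫`. -/
noncomputable def cf (s : ℝ) : ℝ := ∫ u in (0:ℝ)..s, ⟪h, qf S Q h u⟫

variable {S Q h}

lemma qf_int (hq : ∀ t, IntervalIntegrable (qf S Q h) volume 0 t) :
    ∀ a b : ℝ, IntervalIntegrable (qf S Q h) volume a b :=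
  fun a b => (hq a).symm.trans (hq b)

lemma gf_int (hq : ∀ t, IntervalIntegrable (qf S Q h) volume 0 t) :
    ∀ a b : ℝ, IntervalIntegrable (fun u => ⟪h, qf S Q h u⟫) volume a b := by
  intro a b
  have H1 := qf_int hq a b
  exact ⟨(innerSL ℝ h).integrable_comp H1.1, (innerSL ℝ h).integrable_comp H1.2⟩

lemma cf_cont (hq : ∀ t, IntervalIntegrable (qf S Q h) volume 0 t) :
    Continuous (cf S Q h) :=
  intervalIntegral.continuous_primitive (gf_int hq) 0

lemma inner_QtOp (hq : ∀ t, IntervalIntegrable (qf S Q h) volume 0 t) (s : ℝ) :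
    ⟪QtOp S Q s h, h⟫ = cf S Q h s := by
  rw [real_inner_comm]
  have hcomm := (innerSL ℝ h).intervalIntegral_comp_comm (qf_int hq 0 s)
  show ⟪h, ∫ u in (0:ℝ)..s, qf S Q h u⟫ = cf S Q h s
  rw [cf]
  exact hcomm.symm

lemma cf_nonneg (hq : ∀ t, IntervalIntegrable (qf S Q h) volume 0 t)
    (hQpos : ∀ x : H, 0 ≤ ⟪Q x, x⟫) {s : ℝ} (hs : 0 ≤ s) :
    0 ≤ cf S Q h s := by
  refine intervalIntegral.integral_nonneg hs (fun u _ => ?_)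
  have hnn : (0:ℝ) ≤ ⟪qf S Q h u, h⟫ := by
    rw [qf, ← ContinuousLinearMap.adjoint_inner_right (S u)]
    exact hQpos _
  rwa [real_inner_comm]

lemma ouExp_eq (hq : ∀ t, IntervalIntegrable (qf S Q h) volume 0 t) (s : ℝ) (x : H) :
    ouExp S Q h s x
      = Complex.exp (Complex.I * (⟪S s x, h⟫ : ℂ) - ((cf S Q h s : ℝ) : ℂ) / 2) := by
  rw [ouExp, inner_QtOp hq]


lemma norm_ouExp (hq : ∀ t, IntervalIntegrable (qf S Q h) volume 0 t)
    (hQpos : ∀ x : H, 0 ≤ ⟪Q x, x⟫) {s : ℝ} (hs : 0 ≤ s) (x : H) :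
    ‖ouExp S Q h s x‖ ≤ 1 := by
  rw [ouExp_eq hq]
  exact norm_exp_aux _ _ (cf_nonneg hq hQpos hs)

lemma ouExp_contOn (hq : ∀ t, IntervalIntegrable (qf S Q h) volume 0 t)
    (hScont : ∀ x : H, ContinuousOn (fun t => S t x) (Set.Ici 0)) (x : H) :
    ContinuousOn (fun s => ouExp S Q h s x) (Set.Ici 0) := by
  have hF : ContinuousOn
      (fun s => Complex.exp (Complex.I * (⟪S s x, h⟫ : ℂ) - ((cf S Q h s : ℝ) : ℂ) / 2))
      (Set.Ici 0) := by
    apply Complex.continuous_exp.comp_continuousOn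
    apply ContinuousOn.sub
    · exact continuousOn_const.mul
        (Complex.continuous_ofReal.comp_continuousOn ((hScont x).inner continuousOn_const))
    · exact ((Complex.continuous_ofReal.comp (cf_cont hq)).continuousOn).div_const 2
  exact hF.congr (fun s _ => ouExp_eq hq s x)

lemma umeas (hq : ∀ t, IntervalIntegrable (qf S Q h) volume 0 t)
    (hScont : ∀ x : H, ContinuousOn (fun t => S t x) (Set.Ici 0)) (z : H) :
    StronglyMeasurable (Function.uncurry (fun (s : ℝ) (y : H) =>
      Complex.exp (Complex.I * (⟪S (max s 0) (z + y), h⟫ : ℂ)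
        - ((cf S Q h s : ℝ) : ℂ) / 2))) := by
  haveI : SecondCountableTopology H := UniformSpace.secondCountable_of_separable H
  apply stronglyMeasurable_uncurry_of_continuous_of_stronglyMeasurable
  · intro y
    have hmax : Continuous fun s : ℝ => S (max s 0) (z + y) :=
      (hScont (z + y)).comp_continuous (continuous_id.max continuous_const)
        (fun s => le_max_right s 0)
    exact Complex.continuous_exp.comp
      ((continuous_const.mul
          (Complex.continuous_ofReal.comp (hmax.inner continuous_const))).sub
        ((Complex.continuous_ofReal.comp (cf_cont hq)).div_const 2))
  · intro s
    apply Continuous.stronglyMeasurable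
    exact Complex.continuous_exp.comp
      ((continuous_const.mul
          (Complex.continuous_ofReal.comp
            (((S (max s 0)).continuous.comp (continuous_const.add continuous_id)).inner
              continuous_const))).sub continuous_const)

lemma normBound (hScont : ∀ x : H, ContinuousOn (fun t => S t x) (Set.Ici 0)) (T : ℝ) :
    ∃ M : ℝ, 0 ≤ M ∧ ∀ s ∈ Set.Icc (0:ℝ) T, ‖S s‖ ≤ M := by
  obtain ⟨C, hC⟩ := banach_steinhaus (ι := Set.Icc (0:ℝ) T) (g := fun i => S i.1) (fun x => by
    obtain ⟨C, hC⟩ := (isCompact_Icc (a := (0:ℝ)) (b := T)).exists_bound_of_continuousOn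
      ((hScont x).mono Set.Icc_subset_Ici_self)
    exact ⟨C, fun i => hC i.1 i.2⟩)
  exact ⟨max C 0, le_max_right _ _, fun s hs => le_trans (hC ⟨s, hs⟩) (le_max_left _ _)⟩


lemma cf_shift (hq : ∀ g : H, ∀ t, IntervalIntegrable (qf S Q g) volume 0 t)
    (hSadd : ∀ t s : ℝ, 0 ≤ t → 0 ≤ s → S (t + s) = (S t).comp (S s))
    {s t : ℝ} (hs : 0 ≤ s) (ht : 0 ≤ t) :
    ⟪QtOp S Q t ((ContinuousLinearMap.adjoint (S s)) h),
      (ContinuousLinearMap.adjoint (S s)) h⟫ = cf S Q h (s + t) - cf S Q h s := by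
  set k := (ContinuousLinearMap.adjoint (S s)) h with hk
  have e1 : ⟪QtOp S Q t k, k⟫ = cf S Q k t := inner_QtOp (hq k) t
  have e2 : cf S Q k t = ∫ u in (0:ℝ)..t, ⟪h, qf S Q h (s + u)⟫ := by
    rw [cf]
    refine intervalIntegral.integral_congr (fun u hu => ?_)
    have hu0 : 0 ≤ u := by
      rcases (Set.uIcc_of_le ht) ▸ hu with ⟨h1, _⟩
      exact h1
    have hadj : (ContinuousLinearMap.adjoint (S u)) k
        = (ContinuousLinearMap.adjoint (S (s + u))) h := by
      rw [hk, hSadd s u hs hu0, ContinuousLinearMap.adjoint_comp]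
      rfl
    calc ⟪k, qf S Q k u⟫
        = ⟪(ContinuousLinearMap.adjoint (S s)) h,
            S u (Q ((ContinuousLinearMap.adjoint (S (s + u))) h))⟫ := by rw [qf, hadj]
      _ = ⟪h, S s (S u (Q ((ContinuousLinearMap.adjoint (S (s + u))) h)))⟫ :=
          ContinuousLinearMap.adjoint_inner_left (S s) _ h
      _ = ⟪h, qf S Q h (s + u)⟫ := by rw [qf, hSadd s u hs hu0]; rfl
  have e3 : (∫ u in (0:ℝ)..t, ⟪h, qf S Q h (s + u)⟫)
      = ∫ v in s..(s + t), ⟪h, qf S Q h v⟫ := by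
    simpa using intervalIntegral.integral_comp_add_left (a := (0:ℝ)) (b := t) (fun v => ⟪h, qf S Q h v⟫) s
  have e4 : cf S Q h s + (∫ v in s..(s + t), ⟪h, qf S Q h v⟫) = cf S Q h (s + t) :=
    intervalIntegral.integral_add_adjacent_intervals (gf_int (hq h) 0 s)
      (gf_int (hq h) s (s + t))
  rw [e1, e2, e3]
  linarith

lemma gauss
    (hSadd : ∀ t s : ℝ, 0 ≤ t → 0 ≤ s → S (t + s) = (S t).comp (S s))
    (hq : ∀ g : H, ∀ t, IntervalIntegrable (qf S Q g) volume 0 t)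
    {N : ℝ → MeasureTheory.Measure H}
    (hNchar : ∀ t : ℝ, 0 ≤ t → ∀ g : H,
      ∫ y, Complex.exp (Complex.I * (⟪y, g⟫ : ℂ)) ∂(N t) =
        Complex.exp (-(⟪QtOp S Q t g, g⟫ : ℂ) / 2))
    {t s : ℝ} (ht : 0 ≤ t) (hs : 0 ≤ s) (x : H) :
    ∫ y, ouExp S Q h s (S t x + y) ∂(N t) = ouExp S Q h (s + t) x := by
  set k := (ContinuousLinearMap.adjoint (S s)) h with hk
  have hint : ∀ y : H, ouExp S Q h s (S t x + y)
      = Complex.exp (Complex.I * (⟪S (s + t) x, h⟫ : ℂ) - ((cf S Q h s : ℝ) : ℂ) / 2)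
        * Complex.exp (Complex.I * (⟪y, k⟫ : ℂ)) := by
    intro y
    rw [ouExp_eq (hq h), ← Complex.exp_add]
    congr 1
    have h1 : S s (S t x + y) = S (s + t) x + S s y := by
      rw [map_add, hSadd s t hs ht]; rfl
    have h2 : ⟪y, k⟫ = ⟪S s y, h⟫ := ContinuousLinearMap.adjoint_inner_right (S s) y h
    rw [h1, inner_add_left, h2]
    push_cast
    ring
  simp only [hint]
  rw [MeasureTheory.integral_const_mul, hNchar t ht k, ← Complex.exp_add, ouExp_eq (hq h)]
  congr 1
  rw [cf_shift hq hSadd hs ht]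
  push_cast
  ring


lemma ROU_phiA
    (hSadd : ∀ t s : ℝ, 0 ≤ t → 0 ≤ s → S (t + s) = (S t).comp (S s))
    (hScont : ∀ x : H, ContinuousOn (fun t => S t x) (Set.Ici 0))
    (hQpos : ∀ x : H, 0 ≤ ⟪Q x, x⟫)
    (hq : ∀ g : H, ∀ t, IntervalIntegrable (qf S Q g) volume 0 t)
    {N : ℝ → MeasureTheory.Measure H}
    (hNprob : ∀ t, IsProbabilityMeasure (N t))
    (hNchar : ∀ t : ℝ, 0 ≤ t → ∀ g : H,
      ∫ y, Complex.exp (Complex.I * (⟪y, g⟫ : ℂ)) ∂(N t) =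
        Complex.exp (-(⟪QtOp S Q t g, g⟫ : ℂ) / 2))
    {a : ℝ} (ha : 0 < a) {t : ℝ} (ht : 0 ≤ t) (x : H) :
    ROU S N t (phiA S Q h a) x = ∫ s in t..(a + t), ouExp S Q h s x := by
  haveI := hNprob t
  set z := S t x with hz
  set ν := volume.restrict (Set.Ioc (0:ℝ) a) with hν
  have hset : ∀ᵐ p : H × ℝ ∂((N t).prod ν), p.2 ∈ Set.Ioc (0:ℝ) a := by
    rw [ae_iff]
    have hcompl : {p : H × ℝ | ¬ p.2 ∈ Set.Ioc (0:ℝ) a}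
        = (Set.univ : Set H) ×ˢ (Set.Ioc (0:ℝ) a)ᶜ := by
      ext p; simp
    rw [hcompl, MeasureTheory.Measure.prod_prod]
    have : ν (Set.Ioc (0:ℝ) a)ᶜ = 0 := by
      rw [hν, MeasureTheory.Measure.restrict_apply (measurableSet_Ioc.compl)]
      simp
    rw [this, mul_zero]
  have hmeasf : MeasureTheory.AEStronglyMeasurable
      (Function.uncurry (fun (y : H) (s : ℝ) => ouExp S Q h s (z + y))) ((N t).prod ν) := by
    have h1 : MeasureTheory.AEStronglyMeasurable
        (fun p : H × ℝ => Complex.exp (Complex.I * (⟪S (max p.2 0) (z + p.1), h⟫ : ℂ)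
          - ((cf S Q h p.2 : ℝ) : ℂ) / 2)) ((N t).prod ν) :=
      ((umeas (hq h) hScont z).comp_measurable measurable_swap).aestronglyMeasurable
    refine h1.congr ?_
    filter_upwards [hset] with p hp
    show Complex.exp _ = ouExp S Q h p.2 (z + p.1)
    rw [ouExp_eq (hq h), max_eq_left hp.1.le]
  have hint : MeasureTheory.Integrable
      (Function.uncurry (fun (y : H) (s : ℝ) => ouExp S Q h s (z + y))) ((N t).prod ν) := by
    haveI : MeasureTheory.IsFiniteMeasure ν := by
      constructor
      rw [hν, MeasureTheory.Measure.restrict_apply_univ]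
      exact measure_Ioc_lt_top
    refine MeasureTheory.Integrable.mono' (MeasureTheory.integrable_const 1) hmeasf ?_
    filter_upwards [hset] with p hp
    exact norm_ouExp (hq h) hQpos hp.1.le _
  calc ROU S N t (phiA S Q h a) x
      = ∫ y, ∫ s in Set.Ioc (0:ℝ) a, ouExp S Q h s (z + y) ∂volume ∂(N t) := by
        rw [ROU]
        simp only [phiA, intervalIntegral.integral_of_le ha.le]
        rfl
    _ = ∫ s in Set.Ioc (0:ℝ) a, ∫ y, ouExp S Q h s (z + y) ∂(N t) ∂volume :=
        MeasureTheory.integral_integral_swap hint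
    _ = ∫ s in Set.Ioc (0:ℝ) a, ouExp S Q h (s + t) x ∂volume :=
        MeasureTheory.setIntegral_congr_fun measurableSet_Ioc
          (fun s hs => gauss hSadd hq hNchar ht hs.1.le x)
    _ = ∫ s in (0:ℝ)..a, ouExp S Q h (s + t) x :=
        (intervalIntegral.integral_of_le ha.le).symm
    _ = ∫ s in t..(a + t), ouExp S Q h s x := by
        simpa using intervalIntegral.integral_comp_add_right (a := (0:ℝ)) (b := a)
          (fun s => ouExp S Q h s x) t


lemma tendsto_avg (f : ℝ → ℂ) (b : ℝ) (hb : 0 ≤ b)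
    (hcont : ContinuousOn f (Set.Ici 0)) :
    Tendsto (fun t : ℝ => (t:ℝ)⁻¹ • ∫ s in b..(b + t), f s) (𝓝[>] (0:ℝ)) (𝓝 (f b)) := by
  have hmeas : StronglyMeasurableAtFilter f (𝓝[Set.Ioi b] b) volume :=
    ⟨Set.Ici 0, mem_of_superset self_mem_nhdsWithin
        (fun r hr => le_trans hb (le_of_lt hr)),
      hcont.aestronglyMeasurable measurableSet_Ici⟩
  have hc : ContinuousWithinAt f (Set.Ioi b) b :=
    (hcont b hb).mono (fun r hr => le_trans hb (le_of_lt hr))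
  have hd : HasDerivWithinAt (fun u => ∫ s in b..u, f s) (f b) (Set.Ici b) b :=
    intervalIntegral.integral_hasDerivWithinAt_right IntervalIntegrable.refl hmeas hc
  have hslope := hasDerivWithinAt_iff_tendsto_slope.mp hd
  rw [Set.Ici_sdiff_left] at hslope
  have hmap : Tendsto (fun t : ℝ => b + t) (𝓝[>] (0:ℝ)) (𝓝[Set.Ioi b] b) := by
    rw [tendsto_nhdsWithin_iff]
    constructor
    · have h1 : Tendsto (fun t : ℝ => b + t) (𝓝 (0:ℝ)) (𝓝 (b + 0)) :=
        (continuous_const.add continuous_id).tendsto 0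
      rw [add_zero] at h1
      exact h1.mono_left nhdsWithin_le_nhds
    · filter_upwards [self_mem_nhdsWithin] with u hu
      exact lt_add_of_pos_right b hu
  have hcomp := hslope.comp hmap
  refine hcomp.congr fun t => ?_
  show slope (fun u => ∫ s in b..u, f s) b (b + t) = _
  rw [slope_def_module]
  simp [intervalIntegral.integral_same]

end OUAux

/-- for `h ∈ D(A*)` and `a > 0`, the difference quotients of the OU
semigroup on `φ_a` converge pointwise to
`e^{i⟪e^{aA}x,h⟫ - ⟪Q_a h,h⟫/2} - e^{i⟪x,h⟫}`, with `|R_tφ_a(x) - φ_a(x)| ≤ 2t`;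
hence `φ_a ∈ D(L)`. -/
theorem phiA_mem_domain_of_ou_generator
    (S : ℝ → H →L[ℝ] H) (Q : H →L[ℝ] H) (N : ℝ → Measure H)
    (hOU : IsOUSetup S Q N)
    (h : H)
    (hDom : ∃ w : H, Tendsto (fun t : ℝ =>
      t⁻¹ • ((ContinuousLinearMap.adjoint (S t)) h - h)) (𝓝[>] (0:ℝ)) (𝓝 w))
    (a : ℝ) (ha : 0 < a) :
    (∀ x, Tendsto (fun t : ℝ => (ROU S N t (phiA S Q h a) x - phiA S Q h a x) / (t : ℂ))
      (𝓝[>] (0:ℝ))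
      (𝓝 (ouExp S Q h a x - Complex.exp (Complex.I * (⟪x, h⟫ : ℂ))))) ∧
    (∀ t : ℝ, 0 < t → ∀ x, ‖ROU S N t (phiA S Q h a) x - phiA S Q h a x‖ ≤ 2 * t) ∧
    MemDomL S N (phiA S Q h a)
      (fun x => ouExp S Q h a x - Complex.exp (Complex.I * (⟪x, h⟫ : ℂ))) := by
  clear hDom
  obtain ⟨hS0, hSadd, hScont, hQsym, hQpos, hQint, hNprob, hNchar⟩ := hOU
  have hq : ∀ g : H, ∀ t, IntervalIntegrable (OUAux.qf S Q g) volume 0 t := hQint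
  have fcont : ∀ x : H, ContinuousOn (fun s => ouExp S Q h s x) (Set.Ici 0) :=
    fun x => OUAux.ouExp_contOn (hq h) hScont x
  have fint : ∀ (x : H) (b c : ℝ), 0 ≤ b → 0 ≤ c →
      IntervalIntegrable (fun s => ouExp S Q h s x) volume b c := by
    intro x b c hb hc
    apply ContinuousOn.intervalIntegrable
    apply (fcont x).mono
    intro r hr
    exact le_trans (le_min hb hc) hr.1
  have hROU : ∀ t : ℝ, 0 ≤ t → ∀ x, ROU S N t (phiA S Q h a) x
      = ∫ s in t..(a + t), ouExp S Q h s x :=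
    fun t ht x => OUAux.ROU_phiA hSadd hScont hQpos hq hNprob hNchar ha ht x
  have hdiff : ∀ t : ℝ, 0 < t → ∀ x, ROU S N t (phiA S Q h a) x - phiA S Q h a x
      = (∫ s in a..(a + t), ouExp S Q h s x) - ∫ s in (0:ℝ)..t, ouExp S Q h s x := by
    intro t ht x
    rw [hROU t ht.le x, phiA]
    have h1 := intervalIntegral.integral_add_adjacent_intervals
      (fint x t a ht.le ha.le) (fint x a (a + t) ha.le (by positivity))
    have h2 := intervalIntegral.integral_add_adjacent_intervals
      (fint x 0 t le_rfl ht.le) (fint x t a ht.le ha.le)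
    linear_combination h2 - h1
  have hnorm1 : ∀ s : ℝ, 0 ≤ s → ∀ x : H, ‖ouExp S Q h s x‖ ≤ 1 :=
    fun s hs x => OUAux.norm_ouExp (hq h) hQpos hs x
  have hbd : ∀ t : ℝ, 0 < t → ∀ x, ‖ROU S N t (phiA S Q h a) x - phiA S Q h a x‖ ≤ 2 * t := by
    intro t ht x
    rw [hdiff t ht x]
    have b1 : ‖∫ s in a..(a + t), ouExp S Q h s x‖ ≤ 1 * |a + t - a| := by
      apply intervalIntegral.norm_integral_le_of_norm_le_const
      intro s hs
      rw [Set.uIoc_of_le (by linarith)] at hs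
      exact hnorm1 s (le_trans ha.le hs.1.le) x
    have b2 : ‖∫ s in (0:ℝ)..t, ouExp S Q h s x‖ ≤ 1 * |t - 0| := by
      apply intervalIntegral.norm_integral_le_of_norm_le_const
      intro s hs
      rw [Set.uIoc_of_le ht.le] at hs
      exact hnorm1 s hs.1.le x
    rw [show |a + t - a| = t by rw [add_sub_cancel_left]; exact abs_of_pos ht] at b1
    rw [show |t - 0| = t by rw [sub_zero]; exact abs_of_pos ht] at b2
    calc ‖(∫ s in a..(a + t), ouExp S Q h s x) - ∫ s in (0:ℝ)..t, ouExp S Q h s x‖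
        ≤ ‖∫ s in a..(a + t), ouExp S Q h s x‖ + ‖∫ s in (0:ℝ)..t, ouExp S Q h s x‖ :=
          norm_sub_le _ _
      _ ≤ 1 * t + 1 * t := add_le_add b1 b2
      _ = 2 * t := by ring
  have hf0 : ∀ x : H, ouExp S Q h 0 x = Complex.exp (Complex.I * (⟪x, h⟫ : ℂ)) := by
    intro x
    rw [ouExp, hS0]
    simp [QtOp, intervalIntegral.integral_same]
  have hlim : ∀ x, Tendsto (fun t : ℝ =>
      (ROU S N t (phiA S Q h a) x - phiA S Q h a x) / (t : ℂ)) (𝓝[>] (0:ℝ))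
      (𝓝 (ouExp S Q h a x - Complex.exp (Complex.I * (⟪x, h⟫ : ℂ)))) := by
    intro x
    have ht1 := OUAux.tendsto_avg (fun s => ouExp S Q h s x) a ha.le (fcont x)
    have ht2 := OUAux.tendsto_avg (fun s => ouExp S Q h s x) 0 le_rfl (fcont x)
    have hcomb := ht1.sub ht2
    beta_reduce at hcomb
    rw [hf0 x] at hcomb
    refine Tendsto.congr' ?_ hcomb
    filter_upwards [self_mem_nhdsWithin] with t ht
    rw [hdiff t ht x, zero_add, div_eq_mul_inv, mul_comm, mul_sub,
      Complex.real_smul, Complex.real_smul, Complex.ofReal_inv]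
  refine ⟨hlim, hbd, ?_, ?_, ?_, ?_, hlim, ⟨2, fun t ht x => ?_⟩⟩
  · -- UniformContinuous φ
    obtain ⟨M, hM0, hM⟩ := OUAux.normBound hScont a
    have lip1 : ∀ x y : H, ‖phiA S Q h a x - phiA S Q h a y‖
        ≤ 2 * (M * ‖h‖) * a * ‖x - y‖ := by
      intro x y
      rw [phiA, phiA,
        ← intervalIntegral.integral_sub (fint x 0 a le_rfl ha.le) (fint y 0 a le_rfl ha.le)]
      have hb : ∀ s ∈ Set.uIoc (0:ℝ) a,
          ‖ouExp S Q h s x - ouExp S Q h s y‖ ≤ 2 * (M * ‖h‖ * ‖x - y‖) := by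
        intro s hs
        rw [Set.uIoc_of_le ha.le] at hs
        have hs0 : (0:ℝ) ≤ s := hs.1.le
        rw [OUAux.ouExp_eq (hq h), OUAux.ouExp_eq (hq h)]
        refine le_trans (OUAux.exp_pair _ _ _ (OUAux.cf_nonneg (hq h) hQpos hs0)) ?_
        have hab : |⟪S s x, h⟫ - ⟪S s y, h⟫| ≤ M * ‖h‖ * ‖x - y‖ := by
          rw [← inner_sub_left, ← map_sub]
          calc |⟪S s (x - y), h⟫| ≤ ‖S s (x - y)‖ * ‖h‖ := abs_real_inner_le_norm _ _
            _ ≤ (M * ‖x - y‖) * ‖h‖ :=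
                mul_le_mul_of_nonneg_right
                  (le_trans ((S s).le_opNorm _)
                    (mul_le_mul_of_nonneg_right (hM s ⟨hs0, hs.2⟩) (norm_nonneg _)))
                  (norm_nonneg _)
            _ = M * ‖h‖ * ‖x - y‖ := by ring
        linarith
      refine le_trans (intervalIntegral.norm_integral_le_of_norm_le_const hb) ?_
      rw [sub_zero, abs_of_pos ha]
      exact le_of_eq (by ring)
    refine (LipschitzWith.of_dist_le_mul
      (K := Real.toNNReal (2 * (M * ‖h‖) * a)) ?_).uniformContinuous
    intro x y
    rw [dist_eq_norm, dist_eq_norm]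
    exact le_trans (lip1 x y)
      (mul_le_mul_of_nonneg_right (Real.le_coe_toNNReal _) (norm_nonneg _))
  · exact ⟨a, fun x => by
      rw [phiA]
      refine le_trans (intervalIntegral.norm_integral_le_of_norm_le_const (C := 1) ?_) ?_
      · intro s hs
        rw [Set.uIoc_of_le ha.le] at hs
        exact hnorm1 s hs.1.le x
      · rw [sub_zero, abs_of_pos ha, one_mul]⟩
  · -- UniformContinuous g
    have lip2 : ∀ x y : H,
        ‖(ouExp S Q h a x - Complex.exp (Complex.I * (⟪x, h⟫ : ℂ)))
          - (ouExp S Q h a y - Complex.exp (Complex.I * (⟪y, h⟫ : ℂ)))‖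
        ≤ (2 * (‖S a‖ * ‖h‖) + 2 * ‖h‖) * ‖x - y‖ := by
      intro x y
      have e1 : ‖ouExp S Q h a x - ouExp S Q h a y‖ ≤ 2 * (‖S a‖ * ‖h‖) * ‖x - y‖ := by
        rw [OUAux.ouExp_eq (hq h), OUAux.ouExp_eq (hq h)]
        refine le_trans (OUAux.exp_pair _ _ _ (OUAux.cf_nonneg (hq h) hQpos ha.le)) ?_
        have hab : |⟪S a x, h⟫ - ⟪S a y, h⟫| ≤ ‖S a‖ * ‖h‖ * ‖x - y‖ := by
          rw [← inner_sub_left, ← map_sub]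
          calc |⟪S a (x - y), h⟫| ≤ ‖S a (x - y)‖ * ‖h‖ := abs_real_inner_le_norm _ _
            _ ≤ (‖S a‖ * ‖x - y‖) * ‖h‖ :=
                mul_le_mul_of_nonneg_right ((S a).le_opNorm _) (norm_nonneg _)
            _ = ‖S a‖ * ‖h‖ * ‖x - y‖ := by ring
        nlinarith [hab]
      have e2 : ‖Complex.exp (Complex.I * (⟪x, h⟫ : ℂ))
          - Complex.exp (Complex.I * (⟪y, h⟫ : ℂ))‖ ≤ 2 * ‖h‖ * ‖x - y‖ := by
        refine le_trans (OUAux.norm_exp_I_sub_exp_I _ _) ?_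
        have hab : |⟪x, h⟫ - ⟪y, h⟫| ≤ ‖h‖ * ‖x - y‖ := by
          rw [← inner_sub_left]
          calc |⟪x - y, h⟫| ≤ ‖x - y‖ * ‖h‖ := abs_real_inner_le_norm _ _
            _ = ‖h‖ * ‖x - y‖ := by ring
        linarith
      have hre : (ouExp S Q h a x - Complex.exp (Complex.I * (⟪x, h⟫ : ℂ)))
          - (ouExp S Q h a y - Complex.exp (Complex.I * (⟪y, h⟫ : ℂ)))
          = (ouExp S Q h a x - ouExp S Q h a y)
            - (Complex.exp (Complex.I * (⟪x, h⟫ : ℂ))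
              - Complex.exp (Complex.I * (⟪y, h⟫ : ℂ))) := by ring
      rw [hre]
      calc ‖_ - _‖ ≤ ‖ouExp S Q h a x - ouExp S Q h a y‖
            + ‖Complex.exp (Complex.I * (⟪x, h⟫ : ℂ))
              - Complex.exp (Complex.I * (⟪y, h⟫ : ℂ))‖ := norm_sub_le _ _
        _ ≤ 2 * (‖S a‖ * ‖h‖) * ‖x - y‖ + 2 * ‖h‖ * ‖x - y‖ := add_le_add e1 e2
        _ = (2 * (‖S a‖ * ‖h‖) + 2 * ‖h‖) * ‖x - y‖ := by ring
    refine (LipschitzWith.of_dist_le_mul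
      (K := Real.toNNReal (2 * (‖S a‖ * ‖h‖) + 2 * ‖h‖)) ?_).uniformContinuous
    intro x y
    rw [dist_eq_norm, dist_eq_norm]
    exact le_trans (lip2 x y)
      (mul_le_mul_of_nonneg_right (Real.le_coe_toNNReal _) (norm_nonneg _))
  · exact ⟨2, fun x => by
      refine le_trans (norm_sub_le _ _) ?_
      have h1 := hnorm1 a ha.le x
      have h2 : ‖Complex.exp (Complex.I * (⟪x, h⟫ : ℂ))‖ = 1 := OUAux.norm_exp_I_mul _
      rw [h2]; linarith⟩
  · rw [div_le_iff₀ ht.1]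
    exact hbd t ht.1 x
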